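/- If t mutually orthogonal incomplete latin squares of side n with a common hole of size m exist (t-IMOLS(n;m)) with n > m ≥ 1, then n ≥ (t+1)m. -/

import Mathlib

/-- `L` is an incomplete latin square of side `n` with hole `M`:
cells with both coordinates in `M` are empty, all other cells are filled,
rows and columns have no repeated symbols, and symbols of `M` do not appear
in rows or columns indexed by `M`. -/
def IsILS (n : ℕ) (M : Finset (Fin n)) (L : Fin n → Fin n → Option (Fin n)) : Prop :=
  (∀ i j : Fin n, L i j = none ↔ (i ∈ M ∧ j ∈ M)) ∧
  (∀ i j j' : Fin n, ∀ s : Fin n, L i j = some s → L i j' = some s → j = j') ∧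
  (∀ i i' j : Fin n, ∀ s : Fin n, L i j = some s → L i' j = some s → i = i') ∧
  (∀ i j : Fin n, ∀ s ∈ M, (i ∈ M ∨ j ∈ M) → L i j ≠ some s)

/-- Two incomplete latin squares with common hole `M` are orthogonal: every
ordered pair of symbols not both in `M` occurs exactly once upon superposition. -/
def ILSOrthogonal (n : ℕ) (M : Finset (Fin n))
    (L L' : Fin n → Fin n → Option (Fin n)) : Prop :=
  ∀ s s' : Fin n, ¬(s ∈ M ∧ s' ∈ M) →
    ∃! p : Fin n × Fin n, L p.1 p.2 = some s ∧ L' p.1 p.2 = some s'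

/-- In an ILS, every symbol occurs somewhere in a column outside the hole. -/
lemma ils_exists_row (n : ℕ) (M : Finset (Fin n)) (A : Fin n → Fin n → Option (Fin n))
    (h : IsILS n M A) (j : Fin n) (hj : j ∉ M) (x : Fin n) :
    ∃ i : Fin n, A i j = some x := by
  have hfill : ∀ i : Fin n, ∃ s, A i j = some s := by
    intro i
    cases hAij : A i j with
    | none => exact absurd ((h.1 i j).mp hAij).2 hj
    | some s => exact ⟨s, rfl⟩
  choose g hg using hfill
  have hinj : Function.Injective g := by
    intro i i' hii'
    exact h.2.2.1 i i' j (g i) (hg i) (hii' ▸ hg i')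
  obtain ⟨i, hi⟩ := (Finite.injective_iff_surjective.mp hinj) x
  exact ⟨i, hi ▸ hg i⟩

/-- Key counting lemma: if `a ≠ b`, no cell carries a hole symbol in both squares. -/
lemma no_double_hole (t n m : ℕ) (hm : 1 ≤ m) (hmn : m < n)
    (M : Finset (Fin n)) (hMcard : M.card = m)
    (L : Fin t → Fin n → Fin n → Option (Fin n))
    (hils : ∀ a : Fin t, IsILS n M (L a))
    (horth : ∀ a b : Fin t, a ≠ b → ILSOrthogonal n M (L a) (L b))
    (a b : Fin t) (hab : a ≠ b) (x y : Fin n) (hx : x ∈ M) (hy : y ∈ M)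
    (p₀ : Fin n × Fin n) (hpa : L a p₀.1 p₀.2 = some x)
    (hpb : L b p₀.1 p₀.2 = some y) : False := by
  classical
  set A : Finset (Fin n × Fin n) :=
    Finset.univ.filter (fun p => L a p.1 p.2 = some x) with hA
  have hp₀A : p₀ ∈ A := by simp [hA, hpa]
  -- A.card ≤ n - m : rows of cells in A are distinct and lie outside M
  have hAcard : A.card ≤ n - m := by
    have h1 : A.card ≤ Mᶜ.card := by
      apply Finset.card_le_card_of_injOn Prod.fst
      · intro p hp
        simp only [hA, Finset.mem_coe, Finset.mem_filter] at hp
        simp only [Finset.mem_coe, Finset.mem_compl]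
        intro hmem
        exact (hils a).2.2.2 p.1 p.2 x hx (Or.inl hmem) hp.2
      · intro p hp q hq hpq
        simp only [hA, Finset.mem_coe, Finset.mem_filter] at hp hq
        have := (hils a).2.1 p.1 p.2 q.2 x hp.2 (by rw [hpq]; exact hq.2)
        exact Prod.ext hpq this
    rwa [Finset.card_compl, Fintype.card_fin, hMcard] at h1
  -- injection from Mᶜ (symbols) into A \ {p₀}
  have hexu : ∀ s' ∈ (Mᶜ : Finset (Fin n)),
      ∃ p : Fin n × Fin n, L a p.1 p.2 = some x ∧ L b p.1 p.2 = some s' := by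
    intro s' hs'
    simp only [Finset.mem_compl] at hs'
    exact (horth a b hab x s' (fun h => hs' h.2)).exists
  choose! ψ hψ using hexu
  have hcard2 : Mᶜ.card ≤ (A.erase p₀).card := by
    apply Finset.card_le_card_of_injOn ψ
    · intro s' hs'
      obtain ⟨h1, h2⟩ := hψ s' hs'
      simp only [Finset.mem_coe, Finset.mem_erase, hA, Finset.mem_filter, Finset.mem_univ, true_and]
      refine ⟨?_, h1⟩
      intro hEq
      rw [hEq] at h2
      rw [hpb] at h2
      simp only [Finset.mem_coe, Finset.mem_compl] at hs'
      exact hs' (Option.some.inj h2 ▸ hy)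
    · intro s1 h1 s2 h2 h12
      simp only [Finset.mem_coe] at h1 h2
      have e1 := (hψ s1 h1).2
      have e2 := (hψ s2 h2).2
      rw [h12] at e1
      exact Option.some.inj (e1.symm.trans e2)
  rw [Finset.card_compl, Fintype.card_fin, hMcard,
    Finset.card_erase_of_mem hp₀A] at hcard2
  have hApos : 1 ≤ A.card := Finset.card_pos.mpr ⟨p₀, hp₀A⟩
  omega

/-- If t-IMOLS(n;m) exist with n > m ≥ 1, then n ≥ (t+1)m. -/
theorem imols_inequality
    (t n m : ℕ) (hm : 1 ≤ m) (hmn : m < n)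
    (M : Finset (Fin n)) (hMcard : M.card = m)
    (L : Fin t → Fin n → Fin n → Option (Fin n))
    (hils : ∀ a : Fin t, IsILS n M (L a))
    (horth : ∀ a b : Fin t, a ≠ b → ILSOrthogonal n M (L a) (L b)) :
    (t + 1) * m ≤ n := by
  classical
  -- pick a column outside the hole
  have hMne : (Mᶜ : Finset (Fin n)).Nonempty := by
    rw [← Finset.card_pos, Finset.card_compl, Fintype.card_fin, hMcard]
    omega
  obtain ⟨j, hj⟩ := hMne
  rw [Finset.mem_compl] at hj
  -- for each square a and hole symbol x, the row where x sits in column j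
  have hexists : ∀ q : Fin t × Fin n, q.2 ∈ M → ∃ i : Fin n, L q.1 i j = some q.2 := by
    intro q _
    exact ils_exists_row n M (L q.1) (hils q.1) j hj q.2
  have hne : Nonempty (Fin n) := ⟨⟨0, by omega⟩⟩
  choose! f hf using hexists
  set S : Finset (Fin t × Fin n) := Finset.univ ×ˢ M with hS
  have hmain : S.card ≤ (Mᶜ : Finset (Fin n)).card := by
    apply Finset.card_le_card_of_injOn f
    · intro q hq
      simp only [hS, Finset.mem_coe, Finset.mem_product, Finset.mem_univ, true_and] at hq
      have hq2 := hf q hq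
      simp only [Finset.mem_coe, Finset.mem_compl]
      intro hmem
      exact (hils q.1).2.2.2 (f q) j q.2 hq (Or.inl hmem) hq2
    · intro q1 h1 q2 h2 h12
      simp only [hS, Finset.mem_coe, Finset.mem_product, Finset.mem_univ, true_and] at h1 h2
      have e1 := hf q1 h1
      have e2 := hf q2 h2
      rw [h12] at e1
      by_cases hab : q1.1 = q2.1
      · rw [hab] at e1
        exact Prod.ext hab (Option.some.inj (e1.symm.trans e2))
      · exact absurd (no_double_hole t n m hm hmn M hMcard L hils horth
          q1.1 q2.1 hab q1.2 q2.2 h1 h2 (f q2, j) e1 e2) (fun h => h)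
  have hScard : S.card = t * m := by
    simp [hS, Finset.card_product, hMcard]
  rw [Finset.card_compl, Fintype.card_fin, hMcard] at hmain
  have hfin : (t + 1) * m = t * m + m := by ring
  omega
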